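/- The generalized covariance of an observable with itself in a Gibbs state is nonnegative: cov_{ω_β(H)}(A,A) = ∫₀¹ Tr(ω_β(H)^{1−τ} A ω_β(H)^{τ} A) dτ − (Tr(ω_β(H) A))² ≥ 0 for every Hermitian A. -/

import Mathlib

open Matrix MeasureTheory
open scoped ComplexOrder

noncomputable section

namespace QThermo

variable {ι : Type*} [Fintype ι] [DecidableEq ι]

/-- Matrix exponential. -/
def mexp (A : Matrix ι ι ℂ) : Matrix ι ι ℂ := NormedSpace.exp A

/-- Gibbs state `ω_β(H) = e^{-βH}/Tr(e^{-βH})`. -/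
def gibbs (β : ℝ) (H : Matrix ι ι ℂ) : Matrix ι ι ℂ :=
  (Matrix.trace (mexp ((-β : ℂ) • H)))⁻¹ • mexp ((-β : ℂ) • H)

/-- Matrix logarithm of a Hermitian matrix via its spectral decomposition
(junk value `0` on non-Hermitian inputs; eigenvalue `0` is sent to `Real.log 0 = 0`). -/
def mlog (A : Matrix ι ι ℂ) : Matrix ι ι ℂ :=
  if h : A.IsHermitian then
    (h.eigenvectorUnitary : Matrix ι ι ℂ) *
      Matrix.diagonal (fun i => (Real.log (h.eigenvalues i) : ℂ)) *
      star (h.eigenvectorUnitary : Matrix ι ι ℂ)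
  else 0

/-- von Neumann entropy `S(ρ) = -Tr(ρ log ρ)`. -/
def vNEntropy (ρ : Matrix ι ι ℂ) : ℝ := -(Matrix.trace (ρ * mlog ρ)).re

/-- Quantum relative entropy `S(ρ‖σ) = Tr(ρ (log ρ - log σ))`. -/
def relEntropy (ρ σ : Matrix ι ι ℂ) : ℝ := (Matrix.trace (ρ * (mlog ρ - mlog σ))).re

/-- Non-equilibrium free energy `F(ρ,H) = Tr(ρH) - (1/β) S(ρ)`. -/
def freeEnergy (β : ℝ) (ρ H : Matrix ι ι ℂ) : ℝ :=
  (Matrix.trace (ρ * H)).re - (1 / β) * vNEntropy ρ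

/-- A density matrix: positive semidefinite with unit trace. -/
def IsDensityMatrix (ρ : Matrix ι ι ℂ) : Prop := ρ.PosSemidef ∧ Matrix.trace ρ = 1


/-- Real power of a Hermitian matrix via its spectral decomposition
(junk value `0` on non-Hermitian inputs). -/
def mpow (A : Matrix ι ι ℂ) (τ : ℝ) : Matrix ι ι ℂ :=
  if h : A.IsHermitian then
    (h.eigenvectorUnitary : Matrix ι ι ℂ) *
      Matrix.diagonal (fun i => ((h.eigenvalues i ^ τ : ℝ) : ℂ)) *
      star (h.eigenvectorUnitary : Matrix ι ι ℂ)
  else 0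

/-! ### Auxiliary lemmas -/

section Aux

variable {m : Type*} [Fintype m] [DecidableEq m]

lemma aux_trace_pos [Nonempty m] {M : Matrix m m ℂ} (hM : M.PosDef) :
    0 < M.trace := by
  rw [Matrix.trace]
  apply Finset.sum_pos _ Finset.univ_nonempty
  intro i _
  have h := hM.dotProduct_mulVec_pos (x := Pi.single i 1)
    (fun h => one_ne_zero (α := ℂ) (by simpa using congrFun h i))
  simpa [Matrix.mulVec_single, dotProduct, Pi.single_apply, apply_ite] using h

lemma aux_conj_posDef {U : Matrix m m ℂ} (hU : U ∈ Matrix.unitaryGroup m ℂ)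
    {D : Matrix m m ℂ} (hD : D.PosDef) : (U * D * star U).PosDef := by
  have h2 : U * star U = 1 := hU.2
  refine Matrix.PosDef.of_dotProduct_mulVec_pos ?_ ?_
  · unfold Matrix.IsHermitian
    simp only [Matrix.conjTranspose_mul, Matrix.star_eq_conjTranspose,
      Matrix.conjTranspose_conjTranspose, hD.1.eq, Matrix.mul_assoc]
  · intro x hx
    have hx' : star U *ᵥ x ≠ 0 := by
      intro h
      apply hx
      have := congrArg (U *ᵥ ·) h
      simpa [Matrix.mulVec_mulVec, h2] using this
    have := hD.dotProduct_mulVec_pos hx'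
    convert this using 1
    rw [Matrix.star_mulVec, Matrix.star_eq_conjTranspose, Matrix.conjTranspose_conjTranspose,
      ← Matrix.dotProduct_mulVec, ← Matrix.mulVec_mulVec, ← Matrix.mulVec_mulVec]

lemma aux_smul_posDef {r : ℝ} (hr : 0 < r) {M : Matrix m m ℂ} (hM : M.PosDef) :
    (((r : ℂ)) • M).PosDef := by
  refine Matrix.PosDef.of_dotProduct_mulVec_pos ?_ ?_
  · unfold Matrix.IsHermitian
    simp [Matrix.conjTranspose_smul, hM.1.eq, Complex.star_def, Complex.conj_ofReal]
  · intro x hx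
    have := hM.dotProduct_mulVec_pos hx
    rw [Matrix.smul_mulVec, dotProduct_smul]
    exact smul_pos (by exact_mod_cast hr) this

lemma aux_mexp_herm {K : Matrix m m ℂ} (hK : K.IsHermitian) :
    mexp K =
      (hK.eigenvectorUnitary : Matrix m m ℂ) *
        Matrix.diagonal (fun i => ((Real.exp (hK.eigenvalues i) : ℝ) : ℂ)) *
        star (hK.eigenvectorUnitary : Matrix m m ℂ) := by
  set V := (hK.eigenvectorUnitary : Matrix m m ℂ) with hV
  have h1 : star V * V = 1 := hK.eigenvectorUnitary.2.1
  have h2 : V * star V = 1 := hK.eigenvectorUnitary.2.2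
  have hinv : V⁻¹ = star V := Matrix.inv_eq_left_inv h1
  have hU : IsUnit V := by
    refine Matrix.isUnit_iff_isUnit_det _ |>.2 ?_
    exact Matrix.isUnit_det_of_right_inverse h2
  calc NormedSpace.exp K
      = NormedSpace.exp (V * Matrix.diagonal (RCLike.ofReal ∘ hK.eigenvalues) * V⁻¹) := by
        rw [hinv]
        conv_lhs => rw [hK.spectral_theorem, Unitary.conjStarAlgAut_apply]
    _ = V * NormedSpace.exp (Matrix.diagonal (RCLike.ofReal ∘ hK.eigenvalues)) * V⁻¹ :=
        Matrix.exp_conj V _ hU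
    _ = _ := by
        rw [hinv, Matrix.exp_diagonal]
        congr 2
        funext i
        simp [Pi.exp_def, Function.comp, ← Complex.exp_eq_exp_ℂ, Complex.ofReal_exp]

lemma aux_mexp_posDef {K : Matrix m m ℂ} (hK : K.IsHermitian) : (mexp K).PosDef := by
  rw [aux_mexp_herm hK]
  exact aux_conj_posDef hK.eigenvectorUnitary.2
    (Matrix.PosDef.diagonal fun i => by
      exact_mod_cast Complex.zero_lt_real.mpr (Real.exp_pos _))

lemma aux_gibbs_posDef [Nonempty m] (β : ℝ) {H : Matrix m m ℂ} (hH : H.IsHermitian) :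
    (gibbs β H).PosDef := by
  have hK : ((-β : ℂ) • H).IsHermitian := by
    unfold Matrix.IsHermitian
    simp [Matrix.conjTranspose_smul, hH.eq, Complex.star_def, Complex.conj_ofReal]
  have hM : (mexp ((-β : ℂ) • H)).PosDef := aux_mexp_posDef hK
  have ht : 0 < (mexp ((-β : ℂ) • H)).trace := aux_trace_pos hM
  rw [Complex.lt_def] at ht
  have htre : 0 < (mexp ((-β : ℂ) • H)).trace.re := by simpa using ht.1
  have htim : (mexp ((-β : ℂ) • H)).trace = ((mexp ((-β : ℂ) • H)).trace.re : ℂ) := by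
    refine Complex.ext (Complex.ofReal_re _).symm ?_
    rw [Complex.ofReal_im, ← ht.2, Complex.zero_im]
  rw [gibbs, htim, ← Complex.ofReal_inv]
  exact aux_smul_posDef (inv_pos.mpr htre) hM

lemma aux_gibbs_trace [Nonempty m] (β : ℝ) {H : Matrix m m ℂ} (hH : H.IsHermitian) :
    (gibbs β H).trace = 1 := by
  have hK : ((-β : ℂ) • H).IsHermitian := by
    unfold Matrix.IsHermitian
    simp [Matrix.conjTranspose_smul, hH.eq, Complex.star_def, Complex.conj_ofReal]
  have ht : 0 < (mexp ((-β : ℂ) • H)).trace := aux_trace_pos (aux_mexp_posDef hK)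
  rw [gibbs, Matrix.trace_smul, smul_eq_mul, inv_mul_cancel₀ ht.ne']

lemma aux_trace_mul (M N : Matrix m m ℂ) : (M * N).trace = ∑ i, ∑ j, M i j * N j i := by
  simp [Matrix.trace, Matrix.mul_apply, Matrix.diag]

end Aux

/-- nonnegativity of the generalized covariance `cov_{ω_β(H)}(A,A)`. -/
theorem covariance_self_nonneg {n : ℕ} (β : ℝ) (hβ : 0 < β)
    (H A : Matrix (Fin n) (Fin n) ℂ) (hH : H.IsHermitian) (hA : A.IsHermitian) :
    0 ≤ (∫ τ in (0:ℝ)..1,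
          (Matrix.trace (mpow (gibbs β H) (1 - τ) * A * mpow (gibbs β H) τ * A)).re) -
        ((Matrix.trace (gibbs β H * A)).re) ^ 2 := by
  rcases Nat.eq_zero_or_pos n with hn | hn
  · subst hn
    simp [Matrix.trace]
  haveI : Nonempty (Fin n) := ⟨⟨0, hn⟩⟩
  set ρ := gibbs β H with hρdef
  have hρ : ρ.PosDef := aux_gibbs_posDef β hH
  have hherm : ρ.IsHermitian := hρ.1
  set V := (hherm.eigenvectorUnitary : Matrix (Fin n) (Fin n) ℂ) with hVdef
  set p := hherm.eigenvalues with hpdef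
  have hp : ∀ i, 0 < p i := fun i => hρ.eigenvalues_pos i
  have h1 : star V * V = 1 := hherm.eigenvectorUnitary.2.1
  have h2 : V * star V = 1 := hherm.eigenvectorUnitary.2.2
  set B := star V * A * V with hBdef
  have hBherm : Bᴴ = B := by
    rw [hBdef]
    simp only [Matrix.conjTranspose_mul, Matrix.star_eq_conjTranspose,
      Matrix.conjTranspose_conjTranspose, hA.eq, Matrix.mul_assoc]
  have hconj : ∀ i j, B j i = (starRingEnd ℂ) (B i j) := by
    intro i j
    have := congrFun (congrFun hBherm i) j
    simp only [Matrix.conjTranspose_apply] at this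
    rw [← this, starRingEnd_apply, star_star]
  set b : Fin n → ℝ := fun i => (B i i).re with hbdef
  have hBii : ∀ i, B i i = ((b i : ℝ) : ℂ) := by
    intro i
    have := hconj i i
    exact (Complex.conj_eq_iff_re.mp this.symm).symm
  have hmpow : ∀ τ : ℝ, mpow ρ τ =
      V * Matrix.diagonal (fun i => ((p i ^ τ : ℝ) : ℂ)) * star V := by
    intro τ
    rw [mpow, dif_pos hherm]
  -- the trace formula
  have htrace : ∀ τ : ℝ, Matrix.trace (mpow ρ (1 - τ) * A * mpow ρ τ * A) =
      ((∑ i, ∑ j, p i ^ (1 - τ) * p j ^ τ * Complex.normSq (B i j) : ℝ) : ℂ) := by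
    intro τ
    rw [hmpow, hmpow]
    set D₁ := Matrix.diagonal (fun i => ((p i ^ (1 - τ) : ℝ) : ℂ)) with hD₁
    set D₂ := Matrix.diagonal (fun i => ((p i ^ τ : ℝ) : ℂ)) with hD₂
    rw [show V * D₁ * star V * A * (V * D₂ * star V) * A =
        V * (D₁ * (star V * A * (V * (D₂ * (star V * A))))) from by
      simp only [Matrix.mul_assoc]]
    rw [Matrix.trace_mul_comm]
    rw [show (D₁ * (star V * A * (V * (D₂ * (star V * A))))) * V = D₁ * B * D₂ * B from by
      rw [hBdef]; simp only [Matrix.mul_assoc]]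
    rw [aux_trace_mul]
    have hent : ∀ i j, (D₁ * B * D₂) i j = ((p i ^ (1 - τ) : ℝ) : ℂ) * B i j * ((p j ^ τ : ℝ) : ℂ) := by
      intro i j
      rw [hD₁, hD₂, Matrix.mul_diagonal, Matrix.diagonal_mul]
    push_cast
    apply Finset.sum_congr rfl
    intro i _
    apply Finset.sum_congr rfl
    intro j _
    rw [hent]
    calc ((p i ^ (1 - τ) : ℝ) : ℂ) * B i j * ((p j ^ τ : ℝ) : ℂ) * B j i
        = ((p i ^ (1 - τ) : ℝ) : ℂ) * ((p j ^ τ : ℝ) : ℂ) * (B i j * (starRingEnd ℂ) (B i j)) := by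
          rw [hconj i j]; ring
      _ = _ := by rw [Complex.mul_conj]
  -- trace of ρ * A
  have htrA : Matrix.trace (ρ * A) = ((∑ i, p i * b i : ℝ) : ℂ) := by
    conv_lhs => rw [show ρ = V * Matrix.diagonal (RCLike.ofReal ∘ p) * star V from
      hherm.spectral_theorem]
    set D := Matrix.diagonal (RCLike.ofReal ∘ p : Fin n → ℂ) with hD
    rw [show V * D * star V * A = V * (D * (star V * A)) from by simp only [Matrix.mul_assoc]]
    rw [Matrix.trace_mul_comm]
    rw [show (D * (star V * A)) * V = D * B from by rw [hBdef]; simp only [Matrix.mul_assoc]]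
    rw [aux_trace_mul]
    push_cast
    apply Finset.sum_congr rfl
    intro i _
    have hterm : ∀ j, D i j * B j i = if i = j then ((p i : ℝ) : ℂ) * B j i else 0 := by
      intro j
      rw [hD, Matrix.diagonal_apply]
      split <;> simp
    rw [Finset.sum_congr rfl fun j _ => hterm j, Finset.sum_ite_eq]
    simp [hBii i]
  -- sum of eigenvalues is one
  have hone : ∑ i, p i = 1 := by
    have htr : ρ.trace = 1 := aux_gibbs_trace β hH
    have hspec : ρ = V * Matrix.diagonal (RCLike.ofReal ∘ p) * star V := hherm.spectral_theorem
    have h := congrArg Matrix.trace hspec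
    rw [htr, Matrix.trace_mul_cycle, h1, Matrix.one_mul, Matrix.trace_diagonal] at h
    have h' : (1 : ℂ) = ∑ i, ((p i : ℝ) : ℂ) := by rw [h]; rfl
    exact_mod_cast h'.symm
  set f : ℝ → ℝ := fun τ => ∑ i, ∑ j, p i ^ (1 - τ) * p j ^ τ * Complex.normSq (B i j)
    with hfdef
  set c : ℝ := ∑ i, p i * b i with hcdef
  -- pointwise lower bound
  have hbound : ∀ τ ∈ Set.Icc (0:ℝ) 1, c ^ 2 ≤ f τ := by
    intro τ _
    have h1' : ∑ i, p i * b i ^ 2 ≤ f τ := by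
      calc ∑ i, p i * b i ^ 2
          = ∑ i, p i ^ (1 - τ) * p i ^ τ * Complex.normSq (B i i) := by
            apply Finset.sum_congr rfl
            intro i _
            rw [← Real.rpow_add (hp i), sub_add_cancel, Real.rpow_one, hBii i,
              Complex.normSq_ofReal]
            ring
        _ ≤ f τ := by
            apply Finset.sum_le_sum
            intro i _
            exact Finset.single_le_sum
              (fun j _ => mul_nonneg
                (mul_nonneg (Real.rpow_nonneg (hp i).le _) (Real.rpow_nonneg (hp j).le _))
                (Complex.normSq_nonneg _))
              (Finset.mem_univ i)
    have h2' : c ^ 2 ≤ ∑ i, p i * b i ^ 2 := by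
      have := Finset.sum_sq_le_sum_mul_sum_of_sq_eq_mul Finset.univ
        (r := fun i => p i * b i) (f := fun i => p i) (g := fun i => p i * b i ^ 2)
        (fun i _ => (hp i).le)
        (fun i _ => mul_nonneg (hp i).le (sq_nonneg _))
        (fun i _ => by ring)
      rw [hone, one_mul] at this
      exact this
    linarith
  -- continuity and integrability of f
  have hf : Continuous f := by
    have : f = fun τ => ∑ i, ∑ j,
        Real.exp (Real.log (p i) * (1 - τ)) * Real.exp (Real.log (p j) * τ) *
          Complex.normSq (B i j) := by
      funext τ
      apply Finset.sum_congr rfl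
      intro i _
      apply Finset.sum_congr rfl
      intro j _
      rw [Real.rpow_def_of_pos (hp i), Real.rpow_def_of_pos (hp j)]
    rw [this]
    apply continuous_finset_sum
    intro i _
    apply continuous_finset_sum
    intro j _
    fun_prop
  have hint : IntervalIntegrable f volume 0 1 := hf.intervalIntegrable _ _
  -- put everything together
  have hItg : (∫ τ in (0:ℝ)..1,
      (Matrix.trace (mpow ρ (1 - τ) * A * mpow ρ τ * A)).re) = ∫ τ in (0:ℝ)..1, f τ := by
    apply intervalIntegral.integral_congr
    intro τ _
    change (Matrix.trace (mpow ρ (1 - τ) * A * mpow ρ τ * A)).re = f τ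
    rw [htrace τ, Complex.ofReal_re]
  have hle : c ^ 2 ≤ ∫ τ in (0:ℝ)..1, f τ := by
    have h := intervalIntegral.integral_mono_on (μ := volume) zero_le_one
      (intervalIntegrable_const (c := c ^ 2)) hint hbound
    simpa using h
  have hre : (Matrix.trace (ρ * A)).re = c := by rw [htrA, Complex.ofReal_re]
  rw [hItg, hre]
  linarith

end QThermo
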